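/- arXiv:2009.05293 — 2 statements merged into one kernel-verified Lean document; each statement's English description precedes it below -/
import Mathlib

section
/- Let α ∈ (0,1), q = 1/(1−α), and let 1 = r_0 ≥ r_1 ≥ … ≥ r_N > 0 be a nonincreasing sequence. Then for every n ≤ N, the partial sum ∑_{k=1}^{n} r_k^α (1/r_k − 1/r_{k−1}) is at most (1 − r_n^{α−1})/(α−1) + 1, and hence at most C · r_n^{α−1} with C = 1/(1−α) + 1. -/
open Real

lemma stmt6_key (α : ℝ) (hα : 0 < α) (hα1 : α < 1) {a b : ℝ} (ha : 0 < a) (hab : a ≤ b) :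
    a ^ α * (1 / a - 1 / b) ≤ (a ^ (α - 1) - b ^ (α - 1)) / (1 - α) := by
  have hb : 0 < b := ha.trans_le hab
  have h1α : 0 < 1 - α := by linarith
  -- Bernoulli: (a/b)^(1-α) ≤ 1 + (1-α)(a/b - 1)
  have hs : (-1 : ℝ) ≤ a / b - 1 := by
    have : 0 < a / b := div_pos ha hb
    linarith
  have hber := rpow_one_add_le_one_add_mul_self hs (le_of_lt h1α) (by linarith : (1:ℝ) - α ≤ 1)
  rw [add_sub_cancel] at hber
  have hdiv : (a / b) ^ (1 - α) = a ^ (1 - α) * b ^ (α - 1) := by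
    rw [Real.div_rpow ha.le hb.le, div_eq_mul_inv, ← Real.rpow_neg hb.le]
    ring_nf
  rw [hdiv] at hber
  -- multiply by a^(α-1) > 0
  have hpa : (0:ℝ) < a ^ (α - 1) := Real.rpow_pos_of_pos ha _
  have h2 : a ^ (α - 1) * (a ^ (1 - α) * b ^ (α - 1)) ≤
      a ^ (α - 1) * (1 + (1 - α) * (a / b - 1)) :=
    mul_le_mul_of_nonneg_left hber hpa.le
  have hca : a ^ (α - 1) * a ^ (1 - α) = 1 := by
    rw [← Real.rpow_add ha]; norm_num
  rw [← mul_assoc, hca, one_mul] at h2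
  -- rewrite goal
  rw [le_div_iff₀ h1α]
  have hterm : a ^ α * (1 / a - 1 / b) * (1 - α)
      = a ^ (α - 1) * (1 - α) * (1 - a / b) := by
    have h1 : a ^ α * (1 / a) = a ^ (α - 1) := by
      rw [one_div, ← Real.rpow_neg_one a, ← Real.rpow_add ha]
      ring_nf
    have haa : a ^ (α - 1) * a = a ^ α := by
      have h := Real.rpow_add ha (α - 1) 1
      rw [Real.rpow_one] at h
      rw [← h]; ring_nf
    have h2' : a ^ α * (1 / b) = a ^ (α - 1) * (a / b) := by
      rw [one_div, div_eq_mul_inv, ← mul_assoc, haa]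
    calc a ^ α * (1 / a - 1 / b) * (1 - α)
        = (a ^ α * (1/a) - a ^ α * (1/b)) * (1 - α) := by ring
      _ = (a ^ (α - 1) - a ^ (α - 1) * (a / b)) * (1 - α) := by rw [h1, h2']
      _ = a ^ (α - 1) * (1 - α) * (1 - a / b) := by ring
  rw [hterm]
  nlinarith [h2]

lemma stmt6_le_one (N : ℕ) (r : ℕ → ℝ) (hr0 : r 0 = 1)
    (hmono : ∀ k, 1 ≤ k → k ≤ N → r k ≤ r (k - 1)) :
    ∀ n, n ≤ N → r n ≤ 1 := by
  intro n
  induction n with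
  | zero => intro _; rw [hr0]
  | succ m ih =>
    intro h
    have h1 := hmono (m + 1) (Nat.le_add_left 1 m) h
    simp only [Nat.add_sub_cancel] at h1
    exact h1.trans (ih (Nat.le_of_succ_le h))

theorem stmt_6 (α q : ℝ) (hα : 0 < α) (hα1 : α < 1) (hq : q = 1 / (1 - α))
    (N : ℕ) (r : ℕ → ℝ) (hr0 : r 0 = 1)
    (hpos : ∀ k, k ≤ N → 0 < r k)
    (hmono : ∀ k, 1 ≤ k → k ≤ N → r k ≤ r (k - 1))
    (n : ℕ) (hn : n ≤ N) :
    (∑ k ∈ Finset.Icc 1 n, r k ^ α * (1 / r k - 1 / r (k - 1)))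
        ≤ (1 - r n ^ (α - 1)) / (α - 1) + 1 ∧
      (∑ k ∈ Finset.Icc 1 n, r k ^ α * (1 / r k - 1 / r (k - 1)))
        ≤ (1 / (1 - α) + 1) * r n ^ (α - 1) := by
  have h1α : 0 < 1 - α := by linarith
  -- main bound without +1
  have main : ∀ m, m ≤ N →
      (∑ k ∈ Finset.Icc 1 m, r k ^ α * (1 / r k - 1 / r (k - 1)))
        ≤ (1 - r m ^ (α - 1)) / (α - 1) := by
    intro m
    induction m with
    | zero =>
      intro _
      simp [hr0, Real.one_rpow]
    | succ p ih =>
      intro h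
      have hp : p ≤ N := Nat.le_of_succ_le h
      rw [Finset.sum_Icc_succ_top (Nat.one_le_iff_ne_zero.mpr (Nat.succ_ne_zero p))]
      have ha : 0 < r (p + 1) := hpos _ h
      have hab : r (p + 1) ≤ r p := by
        have := hmono (p + 1) (Nat.le_add_left 1 p) h
        simpa using this
      have hkey := stmt6_key α hα hα1 ha hab
      simp only [Nat.add_sub_cancel]
      have hne : (1:ℝ) - α ≠ 0 := by linarith
      have hne' : α - 1 ≠ 0 := by intro h'; apply hne; linarith
      have heq : (r (p+1) ^ (α-1) - r p ^ (α-1)) / (1 - α)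
          = (1 - r (p+1) ^ (α-1)) / (α - 1) - (1 - r p ^ (α-1)) / (α - 1) := by
        field_simp
        ring
      have := ih hp
      linarith [hkey, heq ▸ hkey]
  have hm := main n hn
  have hR : 1 ≤ r n ^ (α - 1) :=
    Real.one_le_rpow_of_pos_of_le_one_of_nonpos (hpos n hn)
      (stmt6_le_one N r hr0 hmono n hn) (by linarith)
  constructor
  · linarith
  · set R := r n ^ (α - 1) with hRdef
    have hne : (1:ℝ) - α ≠ 0 := by linarith
    have hne' : α - 1 ≠ 0 := by intro h'; apply hne; linarith
    have hs : (1 - R) / (α - 1) = (R - 1) / (1 - α) := by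
      field_simp
      ring
    have h3 : (R - 1) / (1 - α) ≤ R / (1 - α) := by
      gcongr
      linarith
    have h4 : R / (1 - α) = (1 / (1 - α)) * R := by ring
    calc (∑ k ∈ Finset.Icc 1 n, r k ^ α * (1 / r k - 1 / r (k - 1)))
        ≤ (1 - R) / (α - 1) + 1 := by linarith
      _ ≤ R / (1 - α) + R := by rw [hs]; linarith
      _ = (1 / (1 - α) + 1) * R := by ring
end

section
/- Let α ∈ (0,1) and (P_n)_{n≥N} a positive nonincreasing sequence with P_N = r and P_n → 0. Suppose (a_n)_{n>N} are reals satisfying P_n^α − P_{n−1}^α ≤ a_n ≤ P_n^α (1 − P_n/P_{n−1}) for all n > N, and the series ∑_{n>N} a_n converges. Then −r^α ≤ ∑_{n>N} a_n ≤ r^α/α. -/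
open Filter Finset

lemma key_ineq {α x y : ℝ} (hα : 0 < α) (hα1 : α ≤ 1) (hy : 0 < y) (hxy : y ≤ x) :
    y ^ α * (1 - y / x) ≤ (x ^ α - y ^ α) / α := by
  have hx : 0 < x := lt_of_lt_of_le hy hxy
  have hs : -1 ≤ y / x - 1 := by
    have : 0 < y / x := div_pos hy hx
    linarith
  have hb := rpow_one_add_le_one_add_mul_self hs hα.le hα1
  rw [add_sub_cancel] at hb
  -- (y/x)^α ≤ 1 + α*(y/x - 1)
  have hdiv : (y / x) ^ α = y ^ α / x ^ α := Real.div_rpow hy.le hx.le α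
  have hxa : 0 < x ^ α := Real.rpow_pos_of_pos hx α
  have hya : 0 < y ^ α := Real.rpow_pos_of_pos hy α
  have h1 : y ^ α ≤ x ^ α * (1 + α * (y / x - 1)) := by
    rw [hdiv] at hb
    calc y ^ α = x ^ α * (y ^ α / x ^ α) := by field_simp
    _ ≤ x ^ α * (1 + α * (y / x - 1)) := by
        exact mul_le_mul_of_nonneg_left hb hxa.le
  have hyx : y ^ α ≤ x ^ α := Real.rpow_le_rpow hy.le hxy hα.le
  have h2 : α * (x ^ α * (1 - y / x)) ≤ x ^ α - y ^ α := by nlinarith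
  have h4 : 0 ≤ 1 - y / x := by
    have := (div_le_one hx).2 hxy
    linarith
  have h3 : α * (y ^ α * (1 - y / x)) ≤ α * (x ^ α * (1 - y / x)) :=
    mul_le_mul_of_nonneg_left (mul_le_mul_of_nonneg_right hyx h4) hα.le
  rw [le_div_iff₀ hα, mul_comm]
  linarith

theorem stmt_14 (α r : ℝ) (hα : 0 < α) (hα1 : α < 1) (N : ℕ) (P : ℕ → ℝ)
    (hpos : ∀ n, N ≤ n → 0 < P n)
    (hmono : ∀ n, N ≤ n → P (n + 1) ≤ P n)
    (hPN : P N = r)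
    (hlim : Filter.Tendsto P Filter.atTop (nhds 0))
    (a : ℕ → ℝ)
    (hlow : ∀ n, N ≤ n → P (n + 1) ^ α - P n ^ α ≤ a (n + 1))
    (hhigh : ∀ n, N ≤ n → a (n + 1) ≤ P (n + 1) ^ α * (1 - P (n + 1) / P n))
    (S : ℝ) (hS : HasSum (fun n : ℕ => a (N + 1 + n)) S) :
    -r ^ α ≤ S ∧ S ≤ r ^ α / α := by
  set f : ℕ → ℝ := fun m => P (N + m) ^ α with hf
  have hf0 : f 0 = r ^ α := by simp [hf, hPN]
  have hidx : ∀ i : ℕ, N + 1 + i = (N + i) + 1 := by omega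
  have hfi : ∀ i : ℕ, f (i + 1) = P ((N + i) + 1) ^ α := by
    intro i; simp [hf]; ring_nf
  have htendf : Tendsto f atTop (nhds 0) := by
    have h1 : Tendsto (fun m => P (N + m)) atTop (nhds 0) :=
      hlim.comp (tendsto_add_atTop_nat N |>.comp tendsto_id) |>.congr (fun m => by simp [Nat.add_comm])
    have h2 : Tendsto (fun x : ℝ => x ^ α) (nhds 0) (nhds 0) := by
      have := (Real.continuousAt_rpow_const 0 α (Or.inr hα.le)).tendsto
      rwa [Real.zero_rpow hα.ne'] at this
    exact h2.comp h1
  have hSa : Tendsto (fun m => ∑ i ∈ range m, a (N + 1 + i)) atTop (nhds S) :=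
    hS.tendsto_sum_nat
  constructor
  · -- lower bound
    have hle : ∀ m, f m - f 0 ≤ ∑ i ∈ range m, a (N + 1 + i) := by
      intro m
      calc f m - f 0 = ∑ i ∈ range m, (f (i + 1) - f i) := (Finset.sum_range_sub f m).symm
      _ ≤ ∑ i ∈ range m, a (N + 1 + i) := by
          apply Finset.sum_le_sum
          intro i _
          rw [hfi i, hidx i]
          exact hlow (N + i) (Nat.le_add_right N i)
    have hlim2 : Tendsto (fun m => f m - f 0) atTop (nhds (-r ^ α)) := by
      have := htendf.sub_const (f 0)
      rw [zero_sub] at this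
      simpa [hf0] using this
    exact le_of_tendsto_of_tendsto' hlim2 hSa hle
  · -- upper bound
    have hle : ∀ m, ∑ i ∈ range m, a (N + 1 + i) ≤ (f 0 - f m) / α := by
      intro m
      have : ∑ i ∈ range m, a (N + 1 + i) ≤ ∑ i ∈ range m, (f i - f (i + 1)) / α := by
        apply Finset.sum_le_sum
        intro i _
        rw [hfi i, hidx i]
        have hyp := hpos ((N + i) + 1) (by omega)
        have hxyp := hmono (N + i) (Nat.le_add_right N i)
        calc a ((N + i) + 1) ≤ P ((N + i) + 1) ^ α * (1 - P ((N + i) + 1) / P (N + i)) :=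
              hhigh (N + i) (Nat.le_add_right N i)
        _ ≤ (P (N + i) ^ α - P ((N + i) + 1) ^ α) / α := key_ineq hα hα1.le hyp hxyp
        _ = (f i - f (i + 1)) / α := by rw [hfi i]
      rw [← Finset.sum_div, Finset.sum_range_sub' f m] at this
      exact this
    have hlim2 : Tendsto (fun m => (f 0 - f m) / α) atTop (nhds (r ^ α / α)) := by
      have := ((tendsto_const_nhds (x := f 0)).sub htendf).div_const α
      rw [sub_zero] at this
      simpa [hf0] using this
    exact le_of_tendsto_of_tendsto' hSa hlim2 hle
end
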